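/- Let (C^1, …, C^k) be an admissible family in ℝ^n. For each j ∈ {1,…,m} let C^{j,0} ⊆ ℝ^n be a closed convex set with 0 ∈ C^{j,0}, let b^{j,1}, …, b^{j,k} ∈ ℝ^n, let r^j ∈ ℝ^k with r^j_i ≥ 0 for all i and r^j ≠ 0, and set C^{j,i} := r^j_i • C^{j,0} + b^{j,i} + rec(C^{j,0}) (Minkowski sums). Assume (a) C^i ⊆ C^{j,i} for all j, i, and (b) for every u ∈ ℝ^n \ {0} with σ_{C^i}(u) < +∞ for every i, there exists j ∈ {1,…,m} such that σ_{C^i}(u) = σ_{C^{j,i}}(u) for all i. Then Q(C^1,…,C^k) = {(x, y) ∈ ℝ^n × ℝ^k : y ∈ Δ^k and for every j ∈ {1,…,m}, x − Σ_{i=1}^k y_i b^{j,i} ∈ (Σ_{i=1}^k r^j_i y_i) • C^{j,0} + rec(C^{j,0})}. Consequently x ∈ ⋃_{i=1}^k C^i if and only if there exists y ∈ {0,1}^k with (x,y) in this set. -/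

import Mathlib

open Pointwise Set

noncomputable section

/-- The recession cone of a set. -/
def recCone {E : Type*} [AddCommGroup E] [Module ℝ E] (S : Set E) : Set E :=
  {d | ∀ x ∈ S, ∀ t : ℝ, 0 ≤ t → x + t • d ∈ S}

/-- An admissible family: each member is a nonempty closed convex set and all members share
the same recession cone. -/
def Admissible {n k : ℕ} (C : Fin k → Set (Fin n → ℝ)) : Prop :=
  (∀ i, (C i).Nonempty) ∧ (∀ i, IsClosed (C i)) ∧ (∀ i, Convex ℝ (C i)) ∧
    ∀ i j, recCone (C i) = recCone (C j)

/-- The Cayley embedding `Q(C¹,…,Cᵏ) = conv(⋃ᵢ Cⁱ × {eⁱ})`. -/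
def CayleyQ {n k : ℕ} (C : Fin k → Set (Fin n → ℝ)) :
    Set ((Fin n → ℝ) × (Fin k → ℝ)) :=
  convexHull ℝ (⋃ i, (C i) ×ˢ ({Pi.single i 1} : Set (Fin k → ℝ)))

def dotp {n : ℕ} (u x : Fin n → ℝ) : ℝ := ∑ j, u j * x j

/-- The support function of a set, with values in the extended reals. -/
def supportFn {n : ℕ} (S : Set (Fin n → ℝ)) (u : Fin n → ℝ) : EReal :=
  sSup ((fun x => ((dotp u x : ℝ) : EReal)) '' S)


open Filter

def Tset {E : Type*} [AddCommGroup E] [Module ℝ E] {K : ℕ} (S : Fin K → Set E) : Set E :=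
  {p | ∃ y : Fin K → ℝ, (∀ i, 0 ≤ y i) ∧ (∑ i, y i = 1) ∧
    ∃ x : Fin K → E, (∀ i, x i ∈ S i) ∧ p = ∑ i, y i • x i}

section RecCone
variable {E : Type*} [AddCommGroup E] [Module ℝ E] {S : Set E}

lemma recCone_zero_mem : (0 : E) ∈ recCone S := by
  intro x hx t ht; simpa using hx

lemma recCone_smul_mem {t : ℝ} (ht : 0 ≤ t) {d : E} (hd : d ∈ recCone S) :
    t • d ∈ recCone S := by
  intro x hx s hs
  rw [smul_smul]
  exact hd x hx (s * t) (mul_nonneg hs ht)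

lemma recCone_add_mem {d d' : E} (hd : d ∈ recCone S) (hd' : d' ∈ recCone S) :
    d + d' ∈ recCone S := by
  intro x hx s hs
  have := hd' (x + s • d) (hd x hx s hs) s hs
  simpa [smul_add, add_assoc] using this

lemma add_recCone_mem {x d : E} (hx : x ∈ S) (hd : d ∈ recCone S) : x + d ∈ S := by
  simpa using hd x hx 1 zero_le_one

end RecCone

section RecLim
variable {E : Type*} [NormedAddCommGroup E] [NormedSpace ℝ E] {S : Set E}

lemma recCone_of_tendsto (hSc : IsClosed S) (hconv : Convex ℝ S)
    (t : ℕ → ℝ) (ht : ∀ m, 0 ≤ t m) (ht0 : Tendsto t atTop (nhds 0))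
    (z : ℕ → E) (hz : ∀ m, z m ∈ t m • S) {w : E}
    (hzw : Tendsto z atTop (nhds w)) : w ∈ recCone S := by
  intro x0 hx0 s hs
  have htend : Tendsto (fun m => (1 - s * t m) • x0 + s • z m) atTop
      (nhds (x0 + s • w)) := by
    have h1 : Tendsto (fun m => (1 - s * t m)) atTop (nhds 1) := by
      have := (tendsto_const_nhds (x := (1:ℝ))).sub (ht0.const_mul s)
      simpa using this
    have := (h1.smul (tendsto_const_nhds (x := x0))).add (hzw.const_smul s)
    simpa using this
  refine hSc.mem_of_tendsto htend ?_
  have hev : ∀ᶠ m in atTop, t m < 1 / (s + 1) := by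
    refine ht0.eventually_lt_const ?_
    positivity
  filter_upwards [hev] with m hm
  obtain ⟨σ, hσ, hzm⟩ := hz m
  have hst : s * t m ≤ 1 := by
    have h1 : s * t m ≤ s * (1 / (s + 1)) := mul_le_mul_of_nonneg_left hm.le hs
    have h2 : s * (1 / (s + 1)) ≤ 1 := by
      rw [mul_one_div, div_le_one (by positivity)]; linarith
    linarith
  have : (1 - s * t m) • x0 + (s * t m) • σ ∈ S :=
    hconv hx0 hσ (by linarith) (mul_nonneg hs (ht m)) (by ring)
  simpa [← hzm, smul_smul] using this

lemma mem_smul_comb (hconv : Convex ℝ S) {a b : ℝ} (ha : 0 ≤ a) (hb : 0 ≤ b)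
    {x x' : E} (hx : x ∈ S) (hx' : x' ∈ S) : a • x + b • x' ∈ (a + b) • S := by
  rcases eq_or_lt_of_le (add_nonneg ha hb) with h | h
  · have ha0 : a = 0 := by linarith [ha, hb]
    have hb0 : b = 0 := by linarith
    exact ⟨x, hx, by simp [ha0, hb0, ← h]⟩
  · refine ⟨(a / (a + b)) • x + (b / (a + b)) • x', hconv hx hx'
      (div_nonneg ha h.le) (div_nonneg hb h.le) (by field_simp), ?_⟩
    dsimp only
    rw [smul_add, smul_smul, smul_smul]
    rw [mul_div_cancel₀ _ h.ne', mul_div_cancel₀ _ h.ne']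

end RecLim

section Supfin

lemma supfin {n : ℕ} {S : Set (Fin n → ℝ)} (hS : S.Nonempty) (u : Fin n → ℝ) (B : ℝ)
    (hB : ∀ x ∈ S, dotp u x ≤ B) :
    ∃ a : ℝ, supportFn S u = (a : EReal) ∧ (∀ x ∈ S, dotp u x ≤ a) ∧ a ≤ B ∧
      ∀ ε : ℝ, 0 < ε → ∃ x ∈ S, a - ε < dotp u x := by
  have h1 : supportFn S u ≤ (B : EReal) := by
    refine sSup_le ?_
    rintro _ ⟨x, hx, rfl⟩
    show ((dotp u x : ℝ) : EReal) ≤ (B : EReal)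
    exact_mod_cast hB x hx
  obtain ⟨x0, hx0⟩ := hS
  have h2 : ((dotp u x0 : ℝ) : EReal) ≤ supportFn S u := le_sSup ⟨x0, hx0, rfl⟩
  have hnetop : supportFn S u ≠ ⊤ := (lt_of_le_of_lt h1 (EReal.coe_lt_top B)).ne
  have hnebot : supportFn S u ≠ ⊥ := ((EReal.bot_lt_coe _).trans_le h2).ne'
  refine ⟨(supportFn S u).toReal, (EReal.coe_toReal hnetop hnebot).symm, ?_, ?_, ?_⟩
  · intro x hx
    have : ((dotp u x : ℝ) : EReal) ≤ supportFn S u := le_sSup ⟨x, hx, rfl⟩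
    rw [← EReal.coe_toReal hnetop hnebot] at this
    exact_mod_cast this
  · rw [← EReal.coe_toReal hnetop hnebot] at h1
    exact_mod_cast h1
  · intro ε hε
    by_contra hcon
    push_neg at hcon
    have : supportFn S u ≤ (((supportFn S u).toReal - ε : ℝ) : EReal) := by
      refine sSup_le ?_
      rintro _ ⟨x, hx, rfl⟩
      show ((dotp u x : ℝ) : EReal) ≤ (((supportFn S u).toReal - ε : ℝ) : EReal)
      exact_mod_cast hcon x hx
    rw [← EReal.coe_toReal hnetop hnebot] at this
    have : (supportFn S u).toReal ≤ (supportFn S u).toReal - ε := by exact_mod_cast this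
    linarith

end Supfin

section Dotp
variable {n : ℕ} (u : Fin n → ℝ)

lemma dotp_add (x y : Fin n → ℝ) : dotp u (x + y) = dotp u x + dotp u y := by
  simp [dotp, mul_add, Finset.sum_add_distrib]

lemma dotp_smul (t : ℝ) (x : Fin n → ℝ) : dotp u (t • x) = t * dotp u x := by
  simp only [dotp, Pi.smul_apply, smul_eq_mul, Finset.mul_sum]
  exact Finset.sum_congr rfl fun i _ => by ring

lemma dotp_zero : dotp u (0 : Fin n → ℝ) = 0 := by simp [dotp]

lemma dotp_sub (x y : Fin n → ℝ) : dotp u (x - y) = dotp u x - dotp u y := by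
  simp [dotp, mul_sub, Finset.sum_sub_distrib]

lemma dotp_sum {ι : Type*} (s : Finset ι) (x : ι → Fin n → ℝ) :
    dotp u (∑ i ∈ s, x i) = ∑ i ∈ s, dotp u (x i) := by
  classical
  induction s using Finset.induction with
  | empty => simp [dotp]
  | @insert a s h ih => rw [Finset.sum_insert h, dotp_add, ih, Finset.sum_insert h]

lemma dotp_single (i : Fin n) : dotp u (Pi.single i 1) = u i := by
  simp [dotp, Pi.single_apply]

lemma zero_dotp (x : Fin n → ℝ) : dotp (0 : Fin n → ℝ) x = 0 := by simp [dotp]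

end Dotp

lemma sum_single_smul {K : ℕ} (x : Fin K → ℝ) :
    ∑ j, x j • (Pi.single j 1 : Fin K → ℝ) = x := by
  funext l
  rw [Finset.sum_apply]
  simp [Pi.single_apply]

lemma single_nonneg_apply {K : ℕ} (i i' : Fin K) : (0:ℝ) ≤ (Pi.single i 1 : Fin K → ℝ) i' := by
  rcases eq_or_ne i' i with h | h <;> simp [Pi.single_apply, h]

lemma sum_single_one {K : ℕ} (i : Fin K) : ∑ i', (Pi.single i 1 : Fin K → ℝ) i' = 1 := by
  simp [Pi.single_apply]

lemma sum_single_smul_vec {K n : ℕ} (i : Fin K) (b : Fin K → Fin n → ℝ) :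
    ∑ i', (Pi.single i 1 : Fin K → ℝ) i' • b i' = b i := by
  have : ∀ i', (Pi.single i 1 : Fin K → ℝ) i' • b i'
      = if i' = i then b i' else 0 := by
    intro i'
    rcases eq_or_ne i' i with h | h <;> simp [Pi.single_apply, h]
  rw [Finset.sum_congr rfl (fun i' _ => this i')]
  simp

lemma sum_single_mul {K : ℕ} (i : Fin K) (r : Fin K → ℝ) :
    ∑ i', r i' * (Pi.single i 1 : Fin K → ℝ) i' = r i := by
  simp [Pi.single_apply, mul_ite]

section TEq
variable {E : Type*} [NormedAddCommGroup E] [NormedSpace ℝ E]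

lemma recCone_prod {F : Type*} [NormedAddCommGroup F] [NormedSpace ℝ F]
    {A : Set E} (hA : A.Nonempty) (v : F) :
    recCone (A ×ˢ ({v} : Set F)) = (recCone A) ×ˢ ({0} : Set F) := by
  ext d
  constructor
  · intro hd
    obtain ⟨x0, hx0⟩ := hA
    have h1 := hd (x0, v) (Set.mem_prod.mpr ⟨hx0, rfl⟩) 1 zero_le_one
    have h2 : v + (1:ℝ) • d.2 = v := (Set.mem_prod.mp h1).2
    refine Set.mem_prod.mpr ⟨?_, ?_⟩
    · intro x hx t ht
      exact (Set.mem_prod.mp (hd (x, v) (Set.mem_prod.mpr ⟨hx, rfl⟩) t ht)).1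
    · have : d.2 = 0 := by
        have := h2
        rw [one_smul] at this
        have h3 : v + d.2 - v = v - v := by rw [this]
        simpa using h3
      simp [this]
  · intro hd
    obtain ⟨hd1, hd2⟩ := Set.mem_prod.mp hd
    intro x hx t ht
    obtain ⟨hx1, hx2⟩ := Set.mem_prod.mp hx
    refine Set.mem_prod.mpr ⟨hd1 x.1 hx1 t ht, ?_⟩
    have hd20 : d.2 = 0 := hd2
    simp [hd20, hx2]

lemma Tset_eq_convexHull {K : ℕ} (S : Fin K → Set E)
    (hne : ∀ i, (S i).Nonempty) (hcv : ∀ i, Convex ℝ (S i)) :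
    Tset S = convexHull ℝ (⋃ i, S i) := by
  classical
  apply Set.Subset.antisymm
  · rintro p ⟨y, hy0, hy1, x, hx, rfl⟩
    have h := Finset.centerMass_mem_convexHull (R := ℝ) Finset.univ
      (w := y) (fun i _ => hy0 i) (by rw [hy1]; norm_num)
      (z := x) (fun i _ => Set.mem_iUnion.mpr ⟨i, hx i⟩)
    rwa [Finset.centerMass_eq_of_sum_1 _ _ hy1] at h
  · refine convexHull_min ?_ ?_
    · intro p hp
      obtain ⟨i, hpi⟩ := Set.mem_iUnion.mp hp
      refine ⟨Pi.single i 1, single_nonneg_apply i, sum_single_one i,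
        Function.update (fun i' => (hne i').some) i p, ?_, ?_⟩
      · intro i'
        rcases eq_or_ne i' i with h | h
        · rw [h, Function.update_self]; exact hpi
        · rw [Function.update_of_ne h]; exact (hne i').some_mem
      · have : ∀ i', (Pi.single i 1 : Fin K → ℝ) i' •
            Function.update (fun i'' => (hne i'').some) i p i'
            = if i' = i then p else 0 := by
          intro i'
          rcases eq_or_ne i' i with h | h
          · rw [if_pos h, h, Function.update_self]
            simp [Pi.single_apply]
          · rw [if_neg h]
            simp [Pi.single_apply, h]
        rw [Finset.sum_congr rfl (fun i' _ => this i'), Finset.sum_ite_eq' Finset.univ i]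
        simp
    · rintro p hp q hq a bb ha hb hab
      obtain ⟨y, hy0, hy1, x, hx, rfl⟩ := hp
      obtain ⟨y', hy0', hy1', x', hx', rfl⟩ := hq
      set Yc : Fin K → ℝ := fun i => a * y i + bb * y' i with hYcdef
      have hYc0 : ∀ i, 0 ≤ Yc i := fun i =>
        add_nonneg (mul_nonneg ha (hy0 i)) (mul_nonneg hb (hy0' i))
      have hYc1 : ∑ i, Yc i = 1 := by
        rw [hYcdef]
        rw [Finset.sum_add_distrib, ← Finset.mul_sum, ← Finset.mul_sum, hy1, hy1']
        simpa using hab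
      set Xc : Fin K → E := fun i => if Yc i = 0 then (hne i).some
        else ((a * y i / Yc i) • x i + (bb * y' i / Yc i) • x' i) with hXcdef
      refine ⟨Yc, hYc0, hYc1, Xc, ?_, ?_⟩
      · intro i
        show (if Yc i = 0 then (hne i).some
          else ((a * y i / Yc i) • x i + (bb * y' i / Yc i) • x' i)) ∈ S i
        by_cases h : Yc i = 0
        · rw [if_pos h]; exact (hne i).some_mem
        · rw [if_neg h]
          refine hcv i (hx i) (hx' i) (div_nonneg (mul_nonneg ha (hy0 i)) (hYc0 i))
            (div_nonneg (mul_nonneg hb (hy0' i)) (hYc0 i)) ?_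
          field_simp
          rfl
      · have hterm : ∀ i, Yc i • Xc i = (a * y i) • x i + (bb * y' i) • x' i := by
          intro i
          show Yc i • (if Yc i = 0 then (hne i).some
            else ((a * y i / Yc i) • x i + (bb * y' i / Yc i) • x' i))
            = (a * y i) • x i + (bb * y' i) • x' i
          by_cases h : Yc i = 0
          · have h1 : a * y i = 0 := by
              have := hYc0 i
              have h2 : 0 ≤ a * y i := mul_nonneg ha (hy0 i)
              have h3 : 0 ≤ bb * y' i := mul_nonneg hb (hy0' i)
              have h4 : a * y i + bb * y' i = 0 := h
              linarith
            have h2 : bb * y' i = 0 := by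
              have h4 : a * y i + bb * y' i = 0 := h
              linarith
            rw [if_pos h, h, h1, h2]
            simp
          · rw [if_neg h, smul_add, smul_smul, smul_smul,
              mul_div_cancel₀ _ h, mul_div_cancel₀ _ h]
        rw [Finset.sum_congr rfl (fun i _ => hterm i), Finset.sum_add_distrib]
        rw [Finset.smul_sum, Finset.smul_sum]
        simp [smul_smul]

end TEq
section TClosed
variable {E : Type*} [NormedAddCommGroup E] [NormedSpace ℝ E] [FiniteDimensional ℝ E]

theorem Tset_isClosed {K : ℕ} (S : Fin K → Set E)
    (hne : ∀ i, (S i).Nonempty) (hcl : ∀ i, IsClosed (S i)) (hcv : ∀ i, Convex ℝ (S i))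
    (hrec : ∀ i i', recCone (S i) = recCone (S i')) : IsClosed (Tset S) := by
  classical
  refine IsSeqClosed.isClosed ?_
  intro f p hf hfp
  -- the bilinear form
  set ℓ : E ≃L[ℝ] EuclideanSpace ℝ (Fin (Module.finrank ℝ E)) := toEuclidean with hℓ
  set B : E → E → ℝ := fun x y => inner ℝ (ℓ x) (ℓ y) with hB
  have hBpos : ∀ x, 0 ≤ B x x := fun x => real_inner_self_nonneg
  have hBzero : ∀ x, B x x = 0 → x = 0 := by
    intro x hx
    have : (ℓ x) = 0 := inner_self_eq_zero.mp hx
    simpa using (ℓ.map_eq_zero_iff).mp this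
  have hBsub : ∀ x y w, B (x - y) w = B x w - B y w := by
    intro x y w
    simp only [hB, map_sub]
    exact inner_sub_left _ _ _
  have hBsmul : ∀ (t : ℝ) x w, B (t • x) w = t * B x w := by
    intro t x w
    simp only [hB, map_smul]
    exact real_inner_smul_left _ _ _
  have hBsymm : ∀ x w, B x w = B w x := fun x w => real_inner_comm _ _
  have hBcont : ∀ w, Continuous fun x => B x w := by
    intro w; exact (ℓ.continuous.inner continuous_const)
  have hBexp : ∀ (a b : E) (ε : ℝ),
      B (a - ε • b) (a - ε • b) = B a a - 2*ε*(B a b) + ε^2 * (B b b) := by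
    intro a b ε
    have h1 : B (a - ε • b) (a - ε • b) = B a (a - ε • b) - ε * B b (a - ε • b) := by
      rw [hBsub, hBsmul]
    have h2 : B a (a - ε • b) = B a a - ε * B b a := by
      rw [hBsymm a (a - ε • b), hBsub, hBsmul]
    have h3 : B b (a - ε • b) = B a b - ε * B b b := by
      rw [hBsymm b (a - ε • b), hBsub, hBsmul]
    rw [h1, h2, h3, hBsymm b a]
    ring
  set g : (Fin K → E) → ℝ := fun z => ∑ i, B (z i) (z i) with hg
  have hgcont : Continuous g := by
    refine continuous_finset_sum _ (fun i _ => ?_)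
    exact ((ℓ.continuous.comp (continuous_apply i)).inner (ℓ.continuous.comp (continuous_apply i)))
  -- minimum existence
  have hmin : ∀ (F : Set (Fin K → E)), IsClosed F → F.Nonempty →
      ∃ z ∈ F, ∀ z' ∈ F, g z ≤ g z' := by
    intro F hFcl hFne
    obtain ⟨z0, hz0⟩ := hFne
    set c := g z0 with hc
    have hKcl : IsClosed (F ∩ {z | g z ≤ c}) :=
      hFcl.inter (isClosed_le hgcont continuous_const)
    have hKbd : Bornology.IsBounded (F ∩ {z | g z ≤ c}) := by
      set M : ℝ := ‖(ℓ.symm : EuclideanSpace ℝ (Fin (Module.finrank ℝ E)) →L[ℝ] E)‖ * Real.sqrt (max c 0) with hMdef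
      have hM0 : (0:ℝ) ≤ M := by positivity
      refine (Metric.isBounded_closedBall (x := (0 : Fin K → E)) (r := M)).subset ?_
      rintro z ⟨hzF, hzc⟩
      rw [Metric.mem_closedBall, dist_zero_right]
      rw [pi_norm_le_iff_of_nonneg hM0]
      intro i
      have h1 : B (z i) (z i) ≤ c := by
        calc B (z i) (z i) ≤ ∑ i', B (z i') (z i') :=
              Finset.single_le_sum (fun i' _ => hBpos (z i')) (Finset.mem_univ i)
        _ ≤ c := hzc
      have h2 : ‖ℓ (z i)‖ ≤ Real.sqrt (max c 0) := by
        rw [← Real.sqrt_sq (norm_nonneg (ℓ (z i)))]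
        apply Real.sqrt_le_sqrt
        rw [← real_inner_self_eq_norm_sq]
        exact le_max_of_le_left h1
      calc ‖z i‖ = ‖ℓ.symm (ℓ (z i))‖ := by simp
        _ ≤ ‖(ℓ.symm : EuclideanSpace ℝ (Fin (Module.finrank ℝ E)) →L[ℝ] E)‖ * ‖ℓ (z i)‖ :=
              (ℓ.symm : EuclideanSpace ℝ (Fin (Module.finrank ℝ E)) →L[ℝ] E).le_opNorm _
        _ ≤ M := by rw [hMdef]; exact mul_le_mul_of_nonneg_left h2 (norm_nonneg _)
    have hKcp : IsCompact (F ∩ {z | g z ≤ c}) :=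
      Metric.isCompact_iff_isClosed_bounded.mpr ⟨hKcl, hKbd⟩
    obtain ⟨z, hzK, hzmin⟩ := hKcp.exists_isMinOn ⟨z0, hz0, le_refl c⟩ hgcont.continuousOn
    refine ⟨z, hzK.1, fun z' hz' => ?_⟩
    by_cases h : g z' ≤ c
    · exact isMinOn_iff.mp hzmin z' ⟨hz', h⟩
    · exact le_trans (isMinOn_iff.mp hzmin z0 ⟨hz0, le_refl c⟩) (le_of_not_ge h)
  -- choose y's
  have hYex : ∀ m, ∃ y : Fin K → ℝ, (∀ i, 0 ≤ y i) ∧ (∑ i, y i = 1) ∧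
      ∃ z : Fin K → E, (∀ i, z i ∈ y i • S i) ∧ ∑ i, z i = f m := by
    intro m
    obtain ⟨y, hy0, hy1, x, hx, hsum⟩ := hf m
    exact ⟨y, hy0, hy1, fun i => y i • x i,
      fun i => Set.smul_mem_smul_set (hx i), hsum.symm⟩
  choose Y hY0 hY1 hYrep using hYex
  have hsmulcl : ∀ (c : ℝ) i, IsClosed (c • S i) := by
    intro c i
    by_cases hc : c = 0
    · rw [hc, Set.zero_smul_set (hne i), ← Set.singleton_zero]
      exact isClosed_singleton
    · exact (hcl i).smul_of_ne_zero hc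
  have hFcl : ∀ m, IsClosed {z : Fin K → E | (∀ i, z i ∈ Y m i • S i) ∧ ∑ i, z i = f m} := by
    intro m
    rw [Set.setOf_and]
    refine IsClosed.inter ?_ (isClosed_eq (continuous_finset_sum _ fun i _ => continuous_apply i) continuous_const)
    have : {z : Fin K → E | ∀ i, z i ∈ Y m i • S i} = ⋂ i, (fun z => z i) ⁻¹' (Y m i • S i) := by
      ext z; simp
    rw [this]
    exact isClosed_iInter (fun i => (hsmulcl _ i).preimage (continuous_apply i))
  have hZex : ∀ m, ∃ z : Fin K → E, ((∀ i, z i ∈ Y m i • S i) ∧ ∑ i, z i = f m) ∧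
      ∀ z', ((∀ i, z' i ∈ Y m i • S i) ∧ ∑ i, z' i = f m) → g z ≤ g z' := by
    intro m
    obtain ⟨z, hz, hz2⟩ := hmin _ (hFcl m) (hYrep m)
    exact ⟨z, hz, fun z' hz' => hz2 z' hz'⟩
  choose Z hZmem hZmin using hZex
  have hZmemi : ∀ m i, Z m i ∈ Y m i • S i := fun m i => (hZmem m).1 i
  have hZsum : ∀ m, ∑ i, Z m i = f m := fun m => (hZmem m).2
  set μ : ℕ → ℝ := fun m => ∑ i, ‖Z m i‖ with hμ
  have hμ0 : ∀ m, 0 ≤ μ m := fun m => Finset.sum_nonneg (fun i _ => norm_nonneg _)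
  by_cases hbdd : ∃ c, ∀ m, μ m ≤ c
  · -- bounded case
    obtain ⟨c, hc⟩ := hbdd
    have hc0 : 0 ≤ c := le_trans (hμ0 0) (hc 0)
    set R : ℝ := 1 + c with hR
    have hmem : ∀ m, (Y m, Z m) ∈ Metric.closedBall (0 : (Fin K → ℝ) × (Fin K → E)) R := by
      intro m
      rw [Metric.mem_closedBall, dist_zero_right, Prod.norm_def]
      refine max_le ?_ ?_
      · rw [pi_norm_le_iff_of_nonneg (by rw [hR]; linarith)]
        intro i
        rw [Real.norm_eq_abs, abs_le]
        constructor
        · have h0 : (0:ℝ) ≤ Y m i := hY0 m i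
          rw [hR]; linarith
        · calc Y m i ≤ ∑ i', Y m i' :=
                Finset.single_le_sum (fun i' _ => hY0 m i') (Finset.mem_univ i)
            _ = 1 := hY1 m
            _ ≤ R := by rw [hR]; linarith
      · rw [pi_norm_le_iff_of_nonneg (by rw [hR]; linarith)]
        intro i
        calc ‖Z m i‖ ≤ μ m :=
              Finset.single_le_sum (fun i' _ => norm_nonneg (Z m i')) (Finset.mem_univ i)
          _ ≤ c := hc m
          _ ≤ R := by rw [hR]; linarith
    obtain ⟨a, _, φ, hφmono, hφtend⟩ :=
      tendsto_subseq_of_bounded Metric.isBounded_closedBall hmem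
    have hYt : Tendsto (fun N => Y (φ N)) atTop (nhds a.1) :=
      (continuous_fst.tendsto a).comp hφtend
    have hZt : Tendsto (fun N => Z (φ N)) atTop (nhds a.2) :=
      (continuous_snd.tendsto a).comp hφtend
    set yl : Fin K → ℝ := a.1 with hyl
    set zl : Fin K → E := a.2 with hzl
    have hYti : ∀ i, Tendsto (fun N => Y (φ N) i) atTop (nhds (yl i)) :=
      fun i => tendsto_pi_nhds.mp hYt i
    have hZti : ∀ i, Tendsto (fun N => Z (φ N) i) atTop (nhds (zl i)) :=
      fun i => tendsto_pi_nhds.mp hZt i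
    have hyl0 : ∀ i, 0 ≤ yl i := fun i =>
      ge_of_tendsto (hYti i) (Filter.Eventually.of_forall fun N => hY0 _ i)
    have hyl1 : ∑ i, yl i = 1 := by
      refine tendsto_nhds_unique (tendsto_finset_sum _ fun i _ => hYti i) ?_
      have : (fun N => ∑ i, Y (φ N) i) = fun _ => (1:ℝ) := funext fun N => hY1 _
      rw [this]
      exact tendsto_const_nhds
    have hsum : ∑ i, zl i = p := by
      refine tendsto_nhds_unique (tendsto_finset_sum _ fun i _ => hZti i) ?_
      have h2 : Tendsto (fun N => f (φ N)) atTop (nhds p) := hfp.comp hφmono.tendsto_atTop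
      have : (fun N => ∑ i, Z (φ N) i) = fun N => f (φ N) := funext fun N => hZsum _
      rw [this]
      exact h2
    have hmain : ∀ i, (yl i = 0 ∧ zl i ∈ recCone (S i)) ∨
        (yl i ≠ 0 ∧ (yl i)⁻¹ • zl i ∈ S i) := by
      intro i
      by_cases hyi : yl i = 0
      · left
        refine ⟨hyi, recCone_of_tendsto (hcl i) (hcv i) (fun N => Y (φ N) i)
          (fun N => hY0 _ i) (by rw [← hyi]; exact hYti i)
          (fun N => Z (φ N) i) (fun N => hZmemi _ i) (hZti i)⟩
      · right
        refine ⟨hyi, ?_⟩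
        have hyipos : 0 < yl i := lt_of_le_of_ne (hyl0 i) (Ne.symm hyi)
        have hev : ∀ᶠ N in atTop, 0 < Y (φ N) i := (hYti i).eventually_const_lt hyipos
        refine (hcl i).mem_of_tendsto (((hYti i).inv₀ hyi).smul (hZti i)) ?_
        filter_upwards [hev] with N hN
        obtain ⟨σ, hσ, hσeq⟩ := hZmemi (φ N) i
        have heq : (Y (φ N) i)⁻¹ • Z (φ N) i = σ := by
          rw [← hσeq]; exact inv_smul_smul₀ (ne_of_gt hN) σ
        show (Y (φ N) i)⁻¹ • Z (φ N) i ∈ S i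
        rw [heq]; exact hσ
    have hylsumne : ∑ i, yl i ≠ 0 := by rw [hyl1]; exact one_ne_zero
    obtain ⟨i0, _, hi0⟩ := Finset.exists_ne_zero_of_sum_ne_zero hylsumne
    set cuml : E := ∑ i, (if yl i = 0 then zl i else 0) with hcum
    have hcumrec : cuml ∈ recCone (S i0) := by
      rw [hcum]
      refine Finset.sum_induction _ (fun w => w ∈ recCone (S i0))
        (fun a b ha hb => recCone_add_mem ha hb) recCone_zero_mem ?_
      intro i _
      by_cases h : yl i = 0
      · rw [if_pos h]
        rcases hmain i with ⟨_, hr⟩ | ⟨hne', _⟩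
        · rw [hrec i0 i]; exact hr
        · exact absurd h hne'
      · rw [if_neg h]; exact recCone_zero_mem
    set X : Fin K → E := fun i => if yl i = 0 then (hne i).some
      else ((yl i)⁻¹ • zl i + (if i = i0 then (yl i)⁻¹ • cuml else 0)) with hXdef
    have hXmem : ∀ i, X i ∈ S i := by
      intro i
      rw [hXdef]
      by_cases h : yl i = 0
      · simp only [if_pos h]; exact (hne i).some_mem
      · simp only [if_neg h]
        rcases hmain i with ⟨h0, _⟩ | ⟨_, hbase⟩
        · exact absurd h0 h
        by_cases hio : i = i0
        · rw [if_pos hio]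
          refine add_recCone_mem hbase ?_
          refine recCone_smul_mem (inv_nonneg.mpr (hyl0 i)) ?_
          rw [hio]
          exact hcumrec
        · rw [if_neg hio, add_zero]; exact hbase
    have hterm : ∀ i, yl i • X i =
        (if yl i = 0 then 0 else zl i) + (if i = i0 then cuml else 0) := by
      intro i
      rw [hXdef]
      by_cases h : yl i = 0
      · have hii0 : i ≠ i0 := fun he => hi0 (he ▸ h)
        simp [if_pos h, hii0, h]
      · by_cases hio : i = i0
        · simp only [if_neg h, if_pos hio, smul_add, smul_inv_smul₀ h, smul_smul,
            mul_inv_cancel₀ h, one_smul]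
        · simp only [if_neg h, if_neg hio, add_zero, smul_inv_smul₀ h]
    have hXsum : ∑ i, yl i • X i = p := by
      calc ∑ i, yl i • X i
          = ∑ i, ((if yl i = 0 then 0 else zl i) + (if i = i0 then cuml else 0)) := by
            exact Finset.sum_congr rfl (fun i _ => hterm i)
        _ = (∑ i, (if yl i = 0 then 0 else zl i)) + (∑ i, (if i = i0 then cuml else 0)) :=
            Finset.sum_add_distrib
        _ = (∑ i, (if yl i = 0 then 0 else zl i)) + cuml := by
            rw [Finset.sum_ite_eq' Finset.univ i0 (fun _ => cuml)]
            simp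
        _ = ∑ i, zl i := by
            rw [hcum, ← Finset.sum_add_distrib]
            refine Finset.sum_congr rfl (fun i _ => ?_)
            by_cases h : yl i = 0 <;> simp [h]
        _ = p := hsum
    exact ⟨yl, hyl0, hyl1, X, hXmem, hXsum.symm⟩
  · -- unbounded case: contradiction
    exfalso
    push_neg at hbdd
    have hfreq : ∀ N : ℕ, ∃ᶠ k in atTop, (N:ℝ) ≤ μ k := by
      intro N
      rw [frequently_atTop]
      intro a
      obtain ⟨m, hm⟩ := hbdd (max (N:ℝ) (∑ k ∈ Finset.range a, |μ k|))
      refine ⟨m, ?_, le_of_lt (lt_of_le_of_lt (le_max_left _ _) hm)⟩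
      by_contra hma
      push_neg at hma
      have h1 : μ m ≤ ∑ k ∈ Finset.range a, |μ k| := by
        calc μ m ≤ |μ m| := le_abs_self _
          _ ≤ ∑ k ∈ Finset.range a, |μ k| :=
              Finset.single_le_sum (f := fun k => |μ k|) (fun k _ => abs_nonneg _)
                (Finset.mem_range.mpr hma)
      have h2 := lt_of_le_of_lt (le_max_right (N:ℝ) (∑ k ∈ Finset.range a, |μ k|)) hm
      linarith
    obtain ⟨φ1, hφ1mono, hφ1⟩ := Filter.extraction_forall_of_frequently (fun N => hfreq N)
    set pat : ℕ → Finset (Fin K) := fun N => Finset.univ.filter (fun i => Y (φ1 N) i = 0) with hpatdef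
    obtain ⟨J, hJinf⟩ := Finite.exists_infinite_fiber pat
    have hJfreq : ∃ᶠ N in atTop, pat N = J := by
      rw [Nat.frequently_atTop_iff_infinite]
      exact Set.infinite_coe_iff.mp hJinf
    obtain ⟨φ2, hφ2mono, hφ2⟩ := extraction_of_frequently_atTop hJfreq
    set ψ : ℕ → ℕ := fun N => φ1 (φ2 (N + 1)) with hψdef
    have hψmono : StrictMono ψ := by
      intro a b h
      exact hφ1mono (hφ2mono (by omega))
    have hμψ : ∀ N : ℕ, (N:ℝ) + 1 ≤ μ (ψ N) := by
      intro N
      have h1 : ((φ2 (N+1) : ℕ):ℝ) ≤ μ (φ1 (φ2 (N+1))) := hφ1 _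
      have h2 : N + 1 ≤ φ2 (N + 1) := hφ2mono.le_apply
      calc (N:ℝ) + 1 = ((N + 1 : ℕ) : ℝ) := by push_cast; ring
        _ ≤ ((φ2 (N+1) : ℕ) : ℝ) := by exact_mod_cast h2
        _ ≤ μ (ψ N) := h1
    have hμψpos : ∀ N, 0 < μ (ψ N) := fun N =>
      lt_of_lt_of_le (by positivity) (hμψ N)
    have hpatψ : ∀ N i, Y (ψ N) i = 0 ↔ i ∈ J := by
      intro N i
      have h := hφ2 (N+1)
      rw [hpatdef] at h
      rw [← h]
      simp
      exact Iff.rfl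
    set W : ℕ → Fin K → E := fun N i => (μ (ψ N))⁻¹ • Z (ψ N) i with hWdef
    have hWle : ∀ N, W N ∈ Metric.closedBall (0 : Fin K → E) 1 := by
      intro N
      rw [Metric.mem_closedBall, dist_zero_right, pi_norm_le_iff_of_nonneg zero_le_one]
      intro i
      show ‖(μ (ψ N))⁻¹ • Z (ψ N) i‖ ≤ 1
      rw [norm_smul, Real.norm_eq_abs, abs_of_nonneg (inv_nonneg.mpr (hμψpos N).le)]
      have h1 : ‖Z (ψ N) i‖ ≤ μ (ψ N) :=
        Finset.single_le_sum (fun i' _ => norm_nonneg (Z (ψ N) i')) (Finset.mem_univ i)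
      have h2 := mul_le_mul_of_nonneg_left h1 (inv_nonneg.mpr (hμψpos N).le)
      rw [inv_mul_cancel₀ (hμψpos N).ne'] at h2
      exact h2
    obtain ⟨w, _, φ3, hφ3mono, hφ3tend⟩ :=
      tendsto_subseq_of_bounded Metric.isBounded_closedBall hWle
    have hWt : ∀ i, Tendsto (fun N => W (φ3 N) i) atTop (nhds (w i)) :=
      fun i => tendsto_pi_nhds.mp hφ3tend i
    set ρ : ℕ → ℕ := fun N => ψ (φ3 N) with hρdef
    have hμρ : ∀ N : ℕ, (N:ℝ) + 1 ≤ μ (ρ N) := by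
      intro N
      refine le_trans ?_ (hμψ (φ3 N))
      have h3 : N ≤ φ3 N := hφ3mono.le_apply
      exact_mod_cast add_le_add_left (Nat.cast_le.mpr h3) 1
    have hμρpos : ∀ N, 0 < μ (ρ N) := fun N => hμψpos (φ3 N)
    have hinvle : ∀ N : ℕ, (μ (ρ N))⁻¹ ≤ 1 / ((N:ℝ) + 1) := by
      intro N
      rw [one_div]
      exact inv_anti₀ (by positivity) (hμρ N)
    have hinvt : Tendsto (fun N => (μ (ρ N))⁻¹) atTop (nhds 0) := by
      refine squeeze_zero (fun N => inv_nonneg.mpr (hμρpos N).le) hinvle ?_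
      exact tendsto_one_div_add_atTop_nhds_zero_nat
    have hYle1 : ∀ m i, Y m i ≤ 1 := by
      intro m i
      calc Y m i ≤ ∑ i', Y m i' :=
            Finset.single_le_sum (fun i' _ => hY0 m i') (Finset.mem_univ i)
        _ = 1 := hY1 m
    -- (1) each w i is in the recession cone
    have hwrec0 : ∀ i, w i ∈ recCone (S i) := by
      intro i
      refine recCone_of_tendsto (hcl i) (hcv i)
        (fun N => (μ (ρ N))⁻¹ * Y (ρ N) i)
        (fun N => mul_nonneg (inv_nonneg.mpr (hμρpos N).le) (hY0 _ i)) ?_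
        (fun N => W (φ3 N) i) ?_ (hWt i)
      · refine squeeze_zero (fun N => mul_nonneg (inv_nonneg.mpr (hμρpos N).le) (hY0 _ i))
          (fun N => ?_) tendsto_one_div_add_atTop_nhds_zero_nat
        calc (μ (ρ N))⁻¹ * Y (ρ N) i ≤ (μ (ρ N))⁻¹ * 1 :=
              mul_le_mul_of_nonneg_left (hYle1 _ i) (inv_nonneg.mpr (hμρpos N).le)
          _ = (μ (ρ N))⁻¹ := mul_one _
          _ ≤ 1 / ((N:ℝ) + 1) := hinvle N
      · intro N
        obtain ⟨σ, hσ, hσeq⟩ := hZmemi (ρ N) i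
        refine ⟨σ, hσ, ?_⟩
        have hσeq2 : Y (ρ N) i • σ = Z (ρ N) i := hσeq
        show ((μ (ρ N))⁻¹ * Y (ρ N) i) • σ = (μ (ψ (φ3 N)))⁻¹ • Z (ψ (φ3 N)) i
        rw [← smul_smul, hσeq2]
    have hwrec : ∀ i i', w i ∈ recCone (S i') := by
      intro i i'
      rw [← hrec i i']
      exact hwrec0 i
    -- (2) the w i sum to zero
    have hsumw : ∑ i, w i = 0 := by
      refine tendsto_nhds_unique (tendsto_finset_sum _ fun i _ => hWt i) ?_
      have heq : (fun N => ∑ i, W (φ3 N) i) = fun N => (μ (ρ N))⁻¹ • f (ρ N) := by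
        funext N
        rw [← Finset.smul_sum]
        show _ = (μ (ψ (φ3 N)))⁻¹ • f (ψ (φ3 N))
        rw [hZsum]
      rw [heq]
      have h2 : Tendsto (fun N => f (ρ N)) atTop (nhds p) :=
        hfp.comp (hψmono.comp hφ3mono).tendsto_atTop
      have := hinvt.smul h2
      rw [zero_smul] at this
      exact this
    -- (3) norms sum to 1
    have hnorm1 : ∑ i, ‖w i‖ = 1 := by
      refine tendsto_nhds_unique (tendsto_finset_sum _ fun i _ => (hWt i).norm) ?_
      have heq : (fun N => ∑ i, ‖W (φ3 N) i‖) = fun _ => (1:ℝ) := by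
        funext N
        show (∑ i, ‖(μ (ψ (φ3 N)))⁻¹ • Z (ψ (φ3 N)) i‖) = (1:ℝ)
        have : ∀ i, ‖(μ (ψ (φ3 N)))⁻¹ • Z (ψ (φ3 N)) i‖
            = (μ (ρ N))⁻¹ * ‖Z (ρ N) i‖ := by
          intro i
          rw [norm_smul, Real.norm_eq_abs, abs_of_nonneg (inv_nonneg.mpr (hμρpos N).le)]
        rw [Finset.sum_congr rfl (fun i _ => this i), ← Finset.mul_sum]
        exact inv_mul_cancel₀ (hμρpos N).ne'
      rw [heq]
      exact tendsto_const_nhds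
    -- (4) w vanishes on J
    have hwJ : ∀ i ∈ J, w i = 0 := by
      intro i hiJ
      refine tendsto_nhds_unique (hWt i) ?_
      have heq : (fun N => W (φ3 N) i) = fun _ => (0:E) := by
        funext N
        have hy0 : Y (ρ N) i = 0 := (hpatψ (φ3 N) i).mpr hiJ
        have hz := hZmemi (ρ N) i
        rw [hy0, Set.zero_smul_set (hne i), ← Set.singleton_zero] at hz
        show (μ (ψ (φ3 N)))⁻¹ • Z (ψ (φ3 N)) i = 0
        have : Z (ρ N) i = 0 := hz
        rw [this, smul_zero]
      rw [heq]
      exact tendsto_const_nhds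
    -- (5) negatives of w i are recession directions too
    have hnegwrec : ∀ i i', -w i ∈ recCone (S i') := by
      intro i i'
      have h := Finset.sum_erase_eq_sub (f := w) (Finset.mem_univ i)
      rw [hsumw, zero_sub] at h
      rw [← h]
      refine Finset.sum_induction _ (· ∈ recCone (S i'))
        (fun a b ha hb => recCone_add_mem ha hb) recCone_zero_mem ?_
      intro i'' _
      exact hwrec i'' i'
    -- (6) orthogonality from minimality
    set γ : ℝ := ∑ i, B (w i) (w i) with hγdef
    have hγ0 : 0 ≤ γ := Finset.sum_nonneg (fun i _ => hBpos (w i))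
    have hβ : ∀ N, ∑ i, B (Z (ρ N) i) (w i) = 0 := by
      intro N
      set βv : ℝ := ∑ i, B (Z (ρ N) i) (w i) with hβdef
      have key : ∀ ε : ℝ, g (Z (ρ N)) ≤ g (fun i => Z (ρ N) i - ε • w i) := by
        intro ε
        refine hZmin (ρ N) _ ⟨?_, ?_⟩
        · intro i
          by_cases hiJ : i ∈ J
          · rw [hwJ i hiJ, smul_zero, sub_zero]
            exact hZmemi (ρ N) i
          · have hy : Y (ρ N) i ≠ 0 := fun h => hiJ ((hpatψ (φ3 N) i).mp h)
            obtain ⟨σ, hσ, hσeq⟩ := hZmemi (ρ N) i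
            have hmem : σ + (-(ε / Y (ρ N) i)) • w i ∈ S i := by
              rcases le_or_gt 0 (-(ε / Y (ρ N) i)) with hc | hc
              · exact hwrec i i σ hσ _ hc
              · have := hnegwrec i i σ hσ (ε / Y (ρ N) i) (by linarith)
                have heq2 : σ + (ε / Y (ρ N) i) • -w i = σ + (-(ε / Y (ρ N) i)) • w i := by
                  rw [smul_neg, ← neg_smul]
                rw [heq2] at this
                exact this
            refine ⟨σ + (-(ε / Y (ρ N) i)) • w i, hmem, ?_⟩
            have hσeq2 : Y (ρ N) i • σ = Z (ρ N) i := hσeq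
            show Y (ρ N) i • (σ + (-(ε / Y (ρ N) i)) • w i) = Z (ρ N) i - ε • w i
            rw [smul_add, smul_smul, hσeq2]
            congr 1
            rw [mul_neg, mul_div_cancel₀ _ hy, neg_smul]
            exact (sub_eq_add_neg _ _).symm
        · show (∑ i, (Z (ρ N) i - ε • w i)) = f (ρ N)
          rw [Finset.sum_sub_distrib, ← Finset.smul_sum, hsumw, smul_zero, sub_zero]
          exact hZsum (ρ N)
      have key3 : ∀ ε : ℝ, 0 ≤ -2*ε*βv + ε^2 * γ := by
        intro ε
        have h := key ε
        have hexp : g (fun i => Z (ρ N) i - ε • w i)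
            = g (Z (ρ N)) - 2*ε*βv + ε^2 * γ := by
          show (∑ i, B (Z (ρ N) i - ε • w i) (Z (ρ N) i - ε • w i)) = _
          have hterm : ∀ i : Fin K, B (Z (ρ N) i - ε • w i) (Z (ρ N) i - ε • w i)
              = B (Z (ρ N) i) (Z (ρ N) i) - 2*ε*(B (Z (ρ N) i) (w i)) + ε^2 * (B (w i) (w i)) :=
            fun i => hBexp (Z (ρ N) i) (w i) ε
          rw [Finset.sum_congr rfl (fun i _ => hterm i)]
          rw [Finset.sum_add_distrib, Finset.sum_sub_distrib, ← Finset.mul_sum, ← Finset.mul_sum]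
        rw [hexp] at h
        linarith
      have hq : (0:ℝ) < γ + 1 := by linarith
      have h := key3 (βv / (γ+1))
      have hexp2 : -2*(βv/(γ+1))*βv + (βv/(γ+1))^2*γ = -(βv^2) * (γ + 2)/(γ+1)^2 := by
        field_simp
        ring
      rw [hexp2] at h
      have h2 : 0 ≤ -(βv^2) * (γ+2) := by
        by_contra hneg
        push_neg at hneg
        have : -(βv^2) * (γ+2)/(γ+1)^2 < 0 := div_neg_of_neg_of_pos hneg (by positivity)
        linarith
      have h3 : βv^2 ≤ 0 := by nlinarith
      have h4 : βv^2 = 0 := le_antisymm h3 (sq_nonneg βv)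
      exact sq_eq_zero_iff.mp h4
    have horth : ∀ N, ∑ i, B (W (φ3 N) i) (w i) = 0 := by
      intro N
      have : ∀ i, B (W (φ3 N) i) (w i) = (μ (ρ N))⁻¹ * B (Z (ρ N) i) (w i) := by
        intro i
        show B ((μ (ψ (φ3 N)))⁻¹ • Z (ψ (φ3 N)) i) (w i) = _
        rw [hBsmul]
      rw [Finset.sum_congr rfl (fun i _ => this i), ← Finset.mul_sum, hβ, mul_zero]
    have hγzero : γ = 0 := by
      have hlim : Tendsto (fun N => ∑ i, B (W (φ3 N) i) (w i)) atTop (nhds γ) := by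
        rw [hγdef]
        exact tendsto_finset_sum _ (fun i _ =>
          ((hBcont (w i)).tendsto (w i)).comp (hWt i))
      have heq : (fun N => ∑ i, B (W (φ3 N) i) (w i)) = fun _ => (0:ℝ) :=
        funext fun N => horth N
      rw [heq] at hlim
      exact tendsto_nhds_unique hlim tendsto_const_nhds
    have hwzero : ∀ i, w i = 0 := by
      intro i
      refine hBzero (w i) ?_
      have := (Finset.sum_eq_zero_iff_of_nonneg (fun i' _ => hBpos (w i'))).mp
        (by rw [← hγdef]; exact hγzero) i (Finset.mem_univ i)
      exact this
    have : (1:ℝ) = 0 := by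
      rw [← hnorm1]
      refine Finset.sum_eq_zero (fun i _ => ?_)
      rw [hwzero i, norm_zero]
    norm_num at this

end TClosed

/-- Corollary 1 -/
theorem stmt9 {n k m : ℕ} (C : Fin k → Set (Fin n → ℝ)) (hC : Admissible C)
    (C0 : Fin m → Set (Fin n → ℝ)) (hC0c : ∀ j, IsClosed (C0 j))
    (hC0conv : ∀ j, Convex ℝ (C0 j)) (hC00 : ∀ j, (0 : Fin n → ℝ) ∈ C0 j)
    (b : Fin m → Fin k → Fin n → ℝ) (r : Fin m → Fin k → ℝ)
    (hr : ∀ j i, 0 ≤ r j i) (hr0 : ∀ j, r j ≠ 0)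
    (D : Fin m → Fin k → Set (Fin n → ℝ))
    (hDdef : ∀ j i, D j i = r j i • C0 j + {b j i} + recCone (C0 j))
    (hsub : ∀ j i, C i ⊆ D j i)
    (hsup : ∀ u : Fin n → ℝ, u ≠ 0 → (∀ i, supportFn (C i) u < ⊤) →
      ∃ j, ∀ i, supportFn (C i) u = supportFn (D j i) u) :
    (CayleyQ C = {p : (Fin n → ℝ) × (Fin k → ℝ) |
        (∀ i, 0 ≤ p.2 i) ∧ (∑ i, p.2 i = 1) ∧
        ∀ j, p.1 - ∑ i, p.2 i • b j i ∈ (∑ i, r j i * p.2 i) • C0 j + recCone (C0 j)}) ∧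
    (∀ x : Fin n → ℝ, (x ∈ ⋃ i, C i) ↔
      ∃ y : Fin k → ℝ, (∀ i, y i = 0 ∨ y i = 1) ∧
        ((∀ i, 0 ≤ y i) ∧ (∑ i, y i = 1) ∧
          ∀ j, x - ∑ i, y i • b j i ∈ (∑ i, r j i * y i) • C0 j + recCone (C0 j))) := by
  classical
  obtain ⟨hCne, hCcl, hCcv, hCrec⟩ := hC
  set A : Set ((Fin n → ℝ) × (Fin k → ℝ)) := {p : (Fin n → ℝ) × (Fin k → ℝ) |
        (∀ i, 0 ≤ p.2 i) ∧ (∑ i, p.2 i = 1) ∧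
        ∀ j, p.1 - ∑ i, p.2 i • b j i ∈ (∑ i, r j i * p.2 i) • C0 j + recCone (C0 j)} with hAdef
  set S : Fin k → Set ((Fin n → ℝ) × (Fin k → ℝ)) :=
    fun i => (C i) ×ˢ ({Pi.single i 1} : Set (Fin k → ℝ)) with hSdef
  have hSne : ∀ i, (S i).Nonempty := fun i => (hCne i).prod (Set.singleton_nonempty _)
  have hScl : ∀ i, IsClosed (S i) := fun i => (hCcl i).prod isClosed_singleton
  have hScv : ∀ i, Convex ℝ (S i) := fun i => (hCcv i).prod (convex_singleton _)
  have hSrec : ∀ i i', recCone (S i) = recCone (S i') := by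
    intro i i'
    show recCone ((C i) ×ˢ _) = recCone ((C i') ×ˢ _)
    rw [recCone_prod (hCne i), recCone_prod (hCne i'), hCrec i i']
  have hQT : CayleyQ C = Tset S := (Tset_eq_convexHull S hSne hScv).symm
  have hQcl : IsClosed (CayleyQ C) := by
    rw [hQT]; exact Tset_isClosed S hSne hScl hScv hSrec
  have hgen : ∀ i, ∀ c ∈ C i, ((c, Pi.single i 1) : (Fin n → ℝ) × (Fin k → ℝ)) ∈ CayleyQ C :=
    fun i c hc => subset_convexHull _ _ (Set.mem_iUnion.mpr ⟨i, Set.mem_prod.mpr ⟨hc, rfl⟩⟩)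
  have hDel : ∀ j i, ∀ c ∈ C0 j, ∀ d ∈ recCone (C0 j), r j i • c + b j i + d ∈ D j i := by
    intro j i c hc d hd
    rw [hDdef j i]
    exact ⟨r j i • c + b j i, ⟨r j i • c, Set.smul_mem_smul_set hc, b j i, rfl, rfl⟩, d, hd, rfl⟩
  -- forward inclusion
  have hQA : CayleyQ C ⊆ A := by
    refine convexHull_min ?_ ?_
    · rintro ⟨xx, yy⟩ hp
      obtain ⟨i, hmem⟩ := Set.mem_iUnion.mp hp
      obtain ⟨hx, hy⟩ := Set.mem_prod.mp hmem
      have hy' : yy = Pi.single i 1 := hy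
      subst hy'
      have hx' : xx ∈ C i := hx
      refine ⟨fun i' => single_nonneg_apply i i', sum_single_one i, ?_⟩
      intro j
      show xx - ∑ i', (Pi.single i 1 : Fin k → ℝ) i' • b j i' ∈
        (∑ i', r j i' * (Pi.single i 1 : Fin k → ℝ) i') • C0 j + recCone (C0 j)
      rw [sum_single_smul_vec i (b j), sum_single_mul i (r j)]
      have hx2 := hsub j i hx'
      rw [hDdef j i] at hx2
      obtain ⟨w1, hw1, d, hd, heq⟩ := hx2
      obtain ⟨w0, hw0, bb, hbb, heq2⟩ := hw1
      have heq' : w1 + d = xx := heq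
      have heq2' : w0 + bb = w1 := heq2
      have hbb' : bb = b j i := hbb
      refine ⟨w0, hw0, d, hd, ?_⟩
      show w0 + d = xx - b j i
      rw [← heq', ← heq2', hbb']
      abel
    · rintro p hp q hq a bb ha hb hab
      obtain ⟨hp1, hp2, hp3⟩ := hp
      obtain ⟨hq1, hq2, hq3⟩ := hq
      refine ⟨?_, ?_, ?_⟩
      · intro i
        show 0 ≤ a * p.2 i + bb * q.2 i
        exact add_nonneg (mul_nonneg ha (hp1 i)) (mul_nonneg hb (hq1 i))
      · show ∑ i, (a * p.2 i + bb * q.2 i) = 1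
        rw [Finset.sum_add_distrib, ← Finset.mul_sum, ← Finset.mul_sum, hp2, hq2]
        simpa using hab
      · intro j
        obtain ⟨wp, hwp, dp, hdp, heqp⟩ := hp3 j
        obtain ⟨cp, hcp, hcpeq⟩ := hwp
        obtain ⟨wq, hwq, dq, hdq, heqq⟩ := hq3 j
        obtain ⟨cq, hcq, hcqeq⟩ := hwq
        have hcpeq' : (∑ i, r j i * p.2 i) • cp = wp := hcpeq
        have hcqeq' : (∑ i, r j i * q.2 i) • cq = wq := hcqeq
        have hr_p : 0 ≤ ∑ i, r j i * p.2 i :=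
          Finset.sum_nonneg fun i _ => mul_nonneg (hr j i) (hp1 i)
        have hr_q : 0 ≤ ∑ i, r j i * q.2 i :=
          Finset.sum_nonneg fun i _ => mul_nonneg (hr j i) (hq1 i)
        have hcomb := mem_smul_comb (hC0conv j) (mul_nonneg ha hr_p) (mul_nonneg hb hr_q) hcp hcq
        have hco : (∑ i, r j i * (a * p.2 i + bb * q.2 i))
            = a * (∑ i, r j i * p.2 i) + bb * (∑ i, r j i * q.2 i) := by
          rw [Finset.mul_sum, Finset.mul_sum, ← Finset.sum_add_distrib]
          exact Finset.sum_congr rfl fun i _ => by ring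
        refine ⟨(a * (∑ i, r j i * p.2 i)) • cp + (bb * (∑ i, r j i * q.2 i)) • cq, ?_,
          a • dp + bb • dq,
          recCone_add_mem (recCone_smul_mem ha hdp) (recCone_smul_mem hb hdq), ?_⟩
        · show _ ∈ (∑ i, r j i * ((a • p + bb • q).2 i)) • C0 j
          have : (∑ i, r j i * ((a • p + bb • q).2 i)) = (∑ i, r j i * (a * p.2 i + bb * q.2 i)) := rfl
          rw [this, hco]
          exact hcomb
        · have heqp' : wp + dp = p.1 - ∑ i, p.2 i • b j i := heqp
          have heqq' : wq + dq = q.1 - ∑ i, q.2 i • b j i := heqq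
          show ((a * (∑ i, r j i * p.2 i)) • cp + (bb * (∑ i, r j i * q.2 i)) • cq)
              + (a • dp + bb • dq)
              = (a • p + bb • q).1 - ∑ i, ((a • p + bb • q).2 i) • b j i
          have hl : (a • p + bb • q).1 = a • p.1 + bb • q.1 := rfl
          have hsump : ∑ i, ((a • p + bb • q).2 i) • b j i
              = a • (∑ i, p.2 i • b j i) + bb • (∑ i, q.2 i • b j i) := by
            rw [Finset.smul_sum, Finset.smul_sum, ← Finset.sum_add_distrib]
            refine Finset.sum_congr rfl fun i _ => ?_
            show (a * p.2 i + bb * q.2 i) • b j i = _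
            rw [add_smul, smul_smul, smul_smul]
          rw [hl, hsump]
          have h2 : a • p.1 + bb • q.1 - (a • (∑ i, p.2 i • b j i) + bb • (∑ i, q.2 i • b j i))
              = a • (p.1 - ∑ i, p.2 i • b j i) + bb • (q.1 - ∑ i, q.2 i • b j i) := by
            rw [smul_sub, smul_sub]; abel
          rw [h2, ← heqp', ← heqq', ← hcpeq', ← hcqeq', smul_add, smul_add, smul_smul, smul_smul]
          abel
  -- reverse inclusion via separation
  have hAQ : A ⊆ CayleyQ C := by
    intro p hpA
    obtain ⟨hy0, hy1, hmem3⟩ := hpA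
    by_contra hpQ
    obtain ⟨f, s, hfs, hsp⟩ :=
      geometric_hahn_banach_closed_point (convex_convexHull ℝ _) hQcl hpQ
    set u : Fin n → ℝ := fun j' => f ((Pi.single j' 1 : Fin n → ℝ), (0 : Fin k → ℝ)) with hudef
    set v : Fin k → ℝ := fun i => f ((0 : Fin n → ℝ), (Pi.single i 1 : Fin k → ℝ)) with hvdef
    have hdecomp : ∀ z : (Fin n → ℝ) × (Fin k → ℝ), f z = dotp u z.1 + dotp v z.2 := by
      intro z
      have hz : z = (∑ j', z.1 j' • (((Pi.single j' 1 : Fin n → ℝ), (0 : Fin k → ℝ)) :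
            (Fin n → ℝ) × (Fin k → ℝ)))
          + ∑ i, z.2 i • (((0 : Fin n → ℝ), (Pi.single i 1 : Fin k → ℝ)) :
            (Fin n → ℝ) × (Fin k → ℝ)) := by
        have h1 : (∑ j', z.1 j' • (((Pi.single j' 1 : Fin n → ℝ), (0 : Fin k → ℝ)) :
            (Fin n → ℝ) × (Fin k → ℝ))) = ((z.1, 0) : (Fin n → ℝ) × (Fin k → ℝ)) := by
          rw [Prod.ext_iff]
          constructor
          · rw [Prod.fst_sum]
            exact sum_single_smul z.1
          · rw [Prod.snd_sum]
            simp
        have h2 : (∑ i, z.2 i • (((0 : Fin n → ℝ), (Pi.single i 1 : Fin k → ℝ)) :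
            (Fin n → ℝ) × (Fin k → ℝ))) = ((0, z.2) : (Fin n → ℝ) × (Fin k → ℝ)) := by
          rw [Prod.ext_iff]
          constructor
          · rw [Prod.fst_sum]; simp
          · rw [Prod.snd_sum]
            exact sum_single_smul z.2
        rw [h1, h2]
        ext <;> simp
      conv_lhs => rw [hz]
      rw [map_add, map_sum, map_sum]
      have h3 : ∀ j', f (z.1 j' • (((Pi.single j' 1 : Fin n → ℝ), (0 : Fin k → ℝ)) :
          (Fin n → ℝ) × (Fin k → ℝ))) = u j' * z.1 j' := by
        intro j'; rw [map_smul]; simp [hudef, mul_comm]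
      have h4 : ∀ i, f (z.2 i • (((0 : Fin n → ℝ), (Pi.single i 1 : Fin k → ℝ)) :
          (Fin n → ℝ) × (Fin k → ℝ))) = v i * z.2 i := by
        intro i; rw [map_smul]; simp [hvdef, mul_comm]
      rw [Finset.sum_congr rfl (fun j' _ => h3 j'), Finset.sum_congr rfl (fun i _ => h4 i)]
      rfl
    have hQle : ∀ i, ∀ c ∈ C i, dotp u c + v i < s := by
      intro i c hc
      have h1 := hfs _ (hgen i c hc)
      rw [hdecomp] at h1
      have h2 : dotp v (Pi.single i 1) = v i := dotp_single v i
      rw [h2] at h1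
      exact h1
    have hfp : f p = dotp u p.1 + dotp v p.2 := hdecomp p
    have hvp : dotp v p.2 = ∑ i, v i * p.2 i := rfl
    by_cases hu : u = 0
    · have h0 : dotp u p.1 = 0 := by rw [hu]; exact zero_dotp p.1
      have hvs : ∀ i, v i < s := by
        intro i
        obtain ⟨c, hc⟩ := hCne i
        have := hQle i c hc
        rw [hu, zero_dotp] at this
        linarith
      have : f p ≤ s := by
        rw [hfp, h0, zero_add, hvp]
        calc ∑ i, v i * p.2 i ≤ ∑ i, s * p.2 i :=
              Finset.sum_le_sum fun i _ => mul_le_mul_of_nonneg_right (hvs i).le (hy0 i)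
          _ = s * ∑ i, p.2 i := by rw [Finset.mul_sum]
          _ = s := by rw [hy1, mul_one]
      linarith
    · have hsupf : ∀ i, ∃ a : ℝ, supportFn (C i) u = (a : EReal) ∧
          (∀ x ∈ C i, dotp u x ≤ a) ∧ a ≤ s - v i ∧
          ∀ ε : ℝ, 0 < ε → ∃ x ∈ C i, a - ε < dotp u x := by
        intro i
        exact supfin (hCne i) u (s - v i) (fun c hc => by have := hQle i c hc; linarith)
      choose a haeq haub hale _ using hsupf
      have hfin : ∀ i, supportFn (C i) u < ⊤ := by
        intro i; rw [haeq i]; exact EReal.coe_lt_top _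
      obtain ⟨j, hj⟩ := hsup u hu hfin
      have hDa : ∀ i, ∀ x ∈ D j i, dotp u x ≤ a i := by
        intro i x hx
        have h1 : ((dotp u x : ℝ):EReal) ≤ supportFn (D j i) u := le_sSup ⟨x, hx, rfl⟩
        rw [← hj i, haeq i] at h1
        exact_mod_cast h1
      obtain ⟨i0, hri0⟩ := Function.ne_iff.mp (hr0 j)
      have hri0pos : 0 < r j i0 := lt_of_le_of_ne (hr j i0) (Ne.symm hri0)
      have hrecneg : ∀ d ∈ recCone (C0 j), dotp u d ≤ 0 := by
        intro d hd
        by_contra hpos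
        push_neg at hpos
        have hb : ∀ t : ℝ, 0 ≤ t → dotp u (b j i0) + t * dotp u d ≤ a i0 := by
          intro t ht
          have hel := hDel j i0 0 (hC00 j) (t • d) (recCone_smul_mem ht hd)
          have h2 := hDa i0 _ hel
          simp only [dotp_add, dotp_smul, dotp_zero, mul_zero, add_zero, zero_add] at h2
          linarith
        have h3 := hb ((a i0 - dotp u (b j i0) + 1)/dotp u d) ?_
        · rw [div_mul_cancel₀ _ (ne_of_gt hpos)] at h3
          linarith
        · have h4 := hb 0 le_rfl
          have h5 : dotp u (b j i0) ≤ a i0 := by linarith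
          exact div_nonneg (by linarith) hpos.le
      have hC0ne : (C0 j).Nonempty := ⟨0, hC00 j⟩
      have hC0bound : ∀ c ∈ C0 j, dotp u c ≤ (a i0 - dotp u (b j i0)) / r j i0 := by
        intro c hc
        have hel := hDel j i0 c hc 0 recCone_zero_mem
        have h2 := hDa i0 _ hel
        simp only [dotp_add, dotp_smul, dotp_zero, mul_zero, add_zero, zero_add] at h2
        rw [le_div_iff₀ hri0pos]
        nlinarith [h2]
      obtain ⟨M, hMeq, hMub, _, hMapprox⟩ := supfin hC0ne u _ hC0bound
      have hM0 : 0 ≤ M := by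
        have h6 := hMub 0 (hC00 j)
        rw [dotp_zero] at h6
        linarith
      have hkey : ∀ i, r j i * M + dotp u (b j i) ≤ a i := by
        intro i
        rcases eq_or_lt_of_le (hr j i) with h0 | hpos'
        · have hel := hDel j i 0 (hC00 j) 0 recCone_zero_mem
          have h2 := hDa i _ hel
          simp only [dotp_add, dotp_smul, dotp_zero, mul_zero, add_zero, zero_add] at h2
          rw [← h0]
          linarith
        · by_contra hcon
          push_neg at hcon
          set ε := (r j i * M + dotp u (b j i) - a i) / r j i with hεdef
          have hεpos : 0 < ε := div_pos (by linarith) hpos'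
          obtain ⟨c, hc, hcgt⟩ := hMapprox ε hεpos
          have hel := hDel j i c hc 0 recCone_zero_mem
          have h2 := hDa i _ hel
          simp only [dotp_add, dotp_smul, dotp_zero, mul_zero, add_zero, zero_add] at h2
          have h3 : r j i * (M - ε) < r j i * dotp u c := mul_lt_mul_of_pos_left hcgt hpos'
          have h4 : r j i * ε = r j i * M + dotp u (b j i) - a i := by
            rw [hεdef, mul_div_cancel₀ _ (ne_of_gt hpos')]
          nlinarith [h2, h3, h4]
      obtain ⟨w0, hw0, d0, hd0, heq0⟩ := hmem3 j
      have heq0' : w0 + d0 = p.1 - ∑ i, p.2 i • b j i := heq0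
      obtain ⟨c0, hc0, hw0eq⟩ := hw0
      have hw0eq' : (∑ i, r j i * p.2 i) • c0 = w0 := hw0eq
      have hρ : 0 ≤ ∑ i, r j i * p.2 i :=
        Finset.sum_nonneg fun i _ => mul_nonneg (hr j i) (hy0 i)
      have hxval : dotp u p.1 = dotp u (∑ i, p.2 i • b j i)
          + (∑ i, r j i * p.2 i) * dotp u c0 + dotp u d0 := by
        have hpe : p.1 = ∑ i, p.2 i • b j i + ((∑ i, r j i * p.2 i) • c0 + d0) := by
          rw [hw0eq', heq0']
          abel
        rw [hpe, dotp_add, dotp_add, dotp_smul]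
        ring
      have hbound : dotp u p.1 ≤ ∑ i, p.2 i * a i := by
        have h5 : dotp u (∑ i, p.2 i • b j i) = ∑ i, p.2 i * dotp u (b j i) := by
          rw [dotp_sum]
          exact Finset.sum_congr rfl fun i _ => dotp_smul u _ _
        have h6 : dotp u c0 ≤ M := hMub c0 hc0
        have h7 : dotp u d0 ≤ 0 := hrecneg d0 hd0
        have h8 : (∑ i, r j i * p.2 i) * dotp u c0 ≤ (∑ i, r j i * p.2 i) * M :=
          mul_le_mul_of_nonneg_left h6 hρ
        have h9 : ∑ i, p.2 i * dotp u (b j i) + (∑ i, r j i * p.2 i) * M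
            ≤ ∑ i, p.2 i * a i := by
          rw [Finset.sum_mul, ← Finset.sum_add_distrib]
          refine Finset.sum_le_sum fun i _ => ?_
          have h10 : p.2 i * dotp u (b j i) + r j i * p.2 i * M
              = p.2 i * (r j i * M + dotp u (b j i)) := by ring
          rw [h10]
          exact mul_le_mul_of_nonneg_left (hkey i) (hy0 i)
        rw [hxval, h5]
        linarith
      have hfinal : f p ≤ s := by
        rw [hfp, hvp]
        have h11 : ∑ i, p.2 i * a i + ∑ i, v i * p.2 i ≤ s := by
          rw [← Finset.sum_add_distrib]
          calc ∑ i, (p.2 i * a i + v i * p.2 i) ≤ ∑ i, p.2 i * s := by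
                refine Finset.sum_le_sum fun i _ => ?_
                have h12 : a i + v i ≤ s := by have := hale i; linarith
                have h13 : p.2 i * a i + v i * p.2 i = p.2 i * (a i + v i) := by ring
                rw [h13]
                exact mul_le_mul_of_nonneg_left h12 (hy0 i)
            _ = s := by rw [← Finset.sum_mul, hy1, one_mul]
        linarith [hbound]
      linarith
  have hpart1 : CayleyQ C = A := Set.Subset.antisymm hQA hAQ
  refine ⟨hpart1, ?_⟩
  intro x
  constructor
  · rintro hx
    obtain ⟨i, hxi⟩ := Set.mem_iUnion.mp hx
    refine ⟨Pi.single i 1, ?_, ?_⟩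
    · intro i'
      rcases eq_or_ne i' i with h | h
      · right; simp [h, Pi.single_apply]
      · left; simp [Pi.single_apply, h]
    · have hmem : ((x, Pi.single i 1) : (Fin n → ℝ) × (Fin k → ℝ)) ∈ CayleyQ C := hgen i x hxi
      rw [hpart1] at hmem
      exact hmem
  · rintro ⟨y, hy01, hyA⟩
    have hmemA : ((x, y) : (Fin n → ℝ) × (Fin k → ℝ)) ∈ A := hyA
    rw [← hpart1, hQT] at hmemA
    obtain ⟨yy, hyy0, hyy1, xx, hxx, heq⟩ := hmemA
    have hsum1 : ∑ i, y i = 1 := hyA.2.1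
    have hex : ∃ i0, y i0 ≠ 0 := by
      by_contra hno
      push_neg at hno
      rw [Finset.sum_eq_zero (fun i _ => hno i)] at hsum1
      norm_num at hsum1
    obtain ⟨i0, hi0⟩ := hex
    have hyi0 : y i0 = 1 := (hy01 i0).resolve_left hi0
    have hyother : ∀ i', i' ≠ i0 → y i' = 0 := by
      intro i' hne'
      have hsplit : y i0 + ∑ i ∈ Finset.univ.erase i0, y i = 1 := by
        rw [Finset.add_sum_erase _ _ (Finset.mem_univ i0)]
        exact hsum1
      have hzero : ∑ i ∈ Finset.univ.erase i0, y i = 0 := by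
        rw [hyi0] at hsplit; linarith
      exact (Finset.sum_eq_zero_iff_of_nonneg
        (fun i _ => hyA.1 i)).mp hzero i' (Finset.mem_erase.mpr ⟨hne', Finset.mem_univ i'⟩)
    have hsnd : y = ∑ i, yy i • (xx i).2 := by
      have h1 := congrArg Prod.snd heq
      rw [Prod.snd_sum] at h1
      exact h1
    have hxx2 : ∀ i, (xx i).2 = Pi.single i 1 := fun i => (Set.mem_prod.mp (hxx i)).2
    have hyyeq : ∀ i', yy i' = y i' := by
      intro i'
      have h1 : y i' = ∑ i, yy i * (Pi.single i 1 : Fin k → ℝ) i' := by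
        calc y i' = (∑ i, yy i • (xx i).2) i' := by rw [← hsnd]
          _ = ∑ i, yy i * ((xx i).2) i' := by rw [Finset.sum_apply]; rfl
          _ = ∑ i, yy i * (Pi.single i 1 : Fin k → ℝ) i' :=
              Finset.sum_congr rfl fun i _ => by rw [hxx2 i]
      rw [h1]
      have h2 : ∀ i, yy i * (Pi.single i 1 : Fin k → ℝ) i' = if i = i' then yy i else 0 := by
        intro i
        rcases eq_or_ne i i' with h | h
        · subst h; simp [Pi.single_apply]
        · simp [Pi.single_apply, Ne.symm h, h]
      rw [Finset.sum_congr rfl (fun i _ => h2 i), Finset.sum_ite_eq' Finset.univ i']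
      simp
    have hfst : x = ∑ i, yy i • (xx i).1 := by
      have h1 := congrArg Prod.fst heq
      rw [Prod.fst_sum] at h1
      exact h1
    have hxval : x = (xx i0).1 := by
      rw [hfst, Finset.sum_eq_single i0]
      · rw [hyyeq i0, hyi0, one_smul]
      · intro i' _ hne'
        rw [hyyeq i', hyother i' hne', zero_smul]
      · intro habs; exact absurd (Finset.mem_univ i0) habs
    exact Set.mem_iUnion.mpr ⟨i0, hxval ▸ (Set.mem_prod.mp (hxx i0)).1⟩
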